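/- Let Ω ⊆ ℝ^d be a compact convex polytope with half-space representation Ω = ⋂_{i=1}^n { x : ⟨a_i, x⟩ ≤ b_i }, fix an index i, and set F = Ω ∩ { x : ⟨a_i, x⟩ = b_i }. For t ∈ ℝ^d let m_i(t) = min{ b_i, b_i + ⟨a_i, t⟩ } and F(t) = (Ω ∩ (Ω + t)) ∩ { x : ⟨a_i, x⟩ = m_i(t) }. Then F(t) converges to F in the Hausdorff metric as t → 0, i.e., the Hausdorff distance between F(t) and F tends to 0 as |t| → 0. -/

import Mathlib

set_option maxHeartbeats 1000000

open MeasureTheory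
open scoped InnerProductSpace


lemma span_bound (d : ℕ) {n : ℕ} (v : Fin n → EuclideanSpace ℝ (Fin d)) (A : Finset (Fin n)) :
    ∃ C > 0, ∀ x ∈ Submodule.span ℝ (v '' ↑A), ∀ M : ℝ, 0 ≤ M →
      (∀ k ∈ A, |⟪v k, x⟫_ℝ| ≤ M) → ‖x‖ ≤ C * M := by
  classical
  set W : Submodule ℝ (EuclideanSpace ℝ (Fin d)) := Submodule.span ℝ (v '' ↑A) with hW
  set Φ : EuclideanSpace ℝ (Fin d) →ₗ[ℝ] (Fin n → ℝ) :=
    LinearMap.pi (fun k => if k ∈ A then innerₛₗ ℝ (v k) else 0) with hΦ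
  have hΦapp : ∀ (x : EuclideanSpace ℝ (Fin d)) (k : Fin n),
      Φ x k = if k ∈ A then ⟪v k, x⟫_ℝ else 0 := by
    intro x k
    simp only [hΦ, LinearMap.pi_apply]
    by_cases h : k ∈ A <;> simp [h]
  have hinj : ∀ x ∈ W, Φ x = 0 → x = 0 := by
    intro x hx h0
    have hker : W ≤ LinearMap.ker (innerₛₗ ℝ x) := by
      rw [hW, Submodule.span_le]
      rintro y ⟨k, hk, rfl⟩
      have h1 : ⟪v k, x⟫_ℝ = 0 := by
        have := congrFun h0 k
        rwa [hΦapp, if_pos (by exact_mod_cast hk)] at this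
      have : ⟪x, v k⟫_ℝ = 0 := by rw [real_inner_comm]; exact h1
      simpa [LinearMap.mem_ker, innerₛₗ_apply_apply] using this
    have : ⟪x, x⟫_ℝ = 0 := by simpa [innerₛₗ_apply_apply] using hker hx
    exact inner_self_eq_zero.mp this
  set Ψ : W →ₗ[ℝ] (Fin n → ℝ) := Φ.domRestrict W with hΨ
  have hΨinj : Function.Injective Ψ := by
    rw [← LinearMap.ker_eq_bot, Submodule.eq_bot_iff]
    intro x hx
    exact Subtype.ext (hinj x.1 x.2 hx)
  set e : W ≃ₗ[ℝ] LinearMap.range Ψ := LinearEquiv.ofInjective Ψ hΨinj with he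
  set g : LinearMap.range Ψ →L[ℝ] W := LinearMap.toContinuousLinearMap e.symm.toLinearMap with hg
  refine ⟨‖g‖ + 1, by positivity, ?_⟩
  intro x hx M hM hbd
  have h2 : ‖(e ⟨x, hx⟩ : Fin n → ℝ)‖ ≤ M := by
    rw [pi_norm_le_iff_of_nonneg hM]
    intro k
    have hco : (e ⟨x, hx⟩ : Fin n → ℝ) k = Φ x k := by
      simp [he, LinearEquiv.ofInjective_apply, hΨ]
    rw [Real.norm_eq_abs, hco, hΦapp]
    by_cases h : k ∈ A
    · rw [if_pos h]; exact hbd k h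
    · rw [if_neg h]; simpa using hM
  have hxeq : (⟨x, hx⟩ : W) = g (e ⟨x, hx⟩) := by
    simp [hg]
  calc ‖x‖ = ‖(⟨x, hx⟩ : W)‖ := rfl
    _ = ‖g (e ⟨x, hx⟩)‖ := by rw [← hxeq]
    _ ≤ ‖g‖ * ‖(e ⟨x, hx⟩)‖ := g.le_opNorm _
    _ ≤ (‖g‖ + 1) * M := by
        have h3 : ‖(e ⟨x, hx⟩)‖ = ‖(e ⟨x, hx⟩ : Fin n → ℝ)‖ := rfl
        have h4 : ‖(e ⟨x, hx⟩)‖ ≤ M := h3 ▸ h2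
        have h5 : ‖g‖ ≤ ‖g‖ + 1 := le_add_of_nonneg_right zero_le_one
        exact mul_le_mul h5 h4 (norm_nonneg _) (by positivity)

lemma hoffman (d : ℕ) {n : ℕ} (v : Fin n → EuclideanSpace ℝ (Fin d)) (E : Finset (Fin n))
    (i : Fin n) (hi : i ∈ E) :
    ∃ C > 0, ∀ (m : Fin n → ℝ) (M : ℝ), (∀ k ∈ E, -M ≤ m k ∧ m k ≤ 0) →
      (∃ x : EuclideanSpace ℝ (Fin d), ⟪v i, x⟫_ℝ = m i ∧ ∀ k ∈ E, ⟪v k, x⟫_ℝ ≤ m k) →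
      ∃ p : EuclideanSpace ℝ (Fin d), ⟪v i, p⟫_ℝ = m i ∧ (∀ k ∈ E, ⟪v k, p⟫_ℝ ≤ m k) ∧
        ‖p‖ ≤ C * M := by
  classical
  choose CA hCA0 hCA using fun A : Finset (Fin n) => span_bound d v A
  set C := (Finset.univ : Finset (Finset (Fin n))).sup' ⟨∅, Finset.mem_univ ∅⟩ CA with hC
  have hCpos : 0 < C := lt_of_lt_of_le (hCA0 ∅) (Finset.le_sup' _ (Finset.mem_univ ∅))
  refine ⟨C, hCpos, ?_⟩
  rintro m M hm ⟨x₀, hx₀i, hx₀⟩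
  have hM0 : 0 ≤ M := by have := hm i hi; linarith [this.1, this.2]
  set P : Set (EuclideanSpace ℝ (Fin d)) :=
    {x | ⟪v i, x⟫_ℝ = m i ∧ ∀ k ∈ E, ⟪v k, x⟫_ℝ ≤ m k} with hP
  have hPne : P.Nonempty := ⟨x₀, hx₀i, hx₀⟩
  have hPclosed : IsClosed P := by
    have h1 : IsClosed {x : EuclideanSpace ℝ (Fin d) | ⟪v i, x⟫_ℝ = m i} :=
      isClosed_eq (continuous_const.inner continuous_id) continuous_const
    have h2 : ∀ k : Fin n, IsClosed {x : EuclideanSpace ℝ (Fin d) | ⟪v k, x⟫_ℝ ≤ m k} :=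
      fun k => isClosed_le (continuous_const.inner continuous_id) continuous_const
    have : P = {x : EuclideanSpace ℝ (Fin d) | ⟪v i, x⟫_ℝ = m i} ∩
        ⋂ k ∈ E, {x : EuclideanSpace ℝ (Fin d) | ⟪v k, x⟫_ℝ ≤ m k} := by
      ext x; simp [hP, Set.mem_iInter]
    rw [this]
    exact h1.inter (isClosed_biInter fun k _ => h2 k)
  have hPconvex : Convex ℝ P := by
    intro x hx y hy α β hα hβ hαβ
    constructor
    · rw [inner_add_right, real_inner_smul_right, real_inner_smul_right, hx.1, hy.1]
      linear_combination m i * hαβ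
    · intro k hk
      rw [inner_add_right, real_inner_smul_right, real_inner_smul_right]
      have e1 : α * ⟪v k, x⟫_ℝ ≤ α * m k := mul_le_mul_of_nonneg_left (hx.2 k hk) hα
      have e2 : β * ⟪v k, y⟫_ℝ ≤ β * m k := mul_le_mul_of_nonneg_left (hy.2 k hk) hβ
      have e3 : α * m k + β * m k = m k := by linear_combination m k * hαβ
      linarith
  obtain ⟨p, hpP, hpmin⟩ : ∃ p ∈ P, ∀ q ∈ P, ‖p‖ ≤ ‖q‖ := by
    obtain ⟨p, hpP, hpeq⟩ :=
      exists_norm_eq_iInf_of_complete_convex hPne hPclosed.isComplete hPconvex 0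
    refine ⟨p, hpP, fun q hq => ?_⟩
    have hb : BddBelow (Set.range fun w : P => ‖(0 : EuclideanSpace ℝ (Fin d)) - w‖) :=
      ⟨0, by rintro _ ⟨w, rfl⟩; exact norm_nonneg _⟩
    have := ciInf_le hb (⟨q, hq⟩ : P)
    rw [← hpeq] at this
    simpa using this
  -- tight set
  set A := E.filter (fun k => ⟪v k, p⟫_ℝ = m k) with hA
  have hiA : i ∈ A := Finset.mem_filter.2 ⟨hi, hpP.1⟩
  set W := Submodule.span ℝ (v '' ↑A) with hWdef
  have hvW : ∀ k ∈ A, v k ∈ W := fun k hk =>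
    Submodule.subset_span ⟨k, by exact_mod_cast hk, rfl⟩
  have hpW : p ∈ W := by
    by_contra hpnW
    set s := ((W.orthogonalProjectionOnto p : W) : EuclideanSpace ℝ (Fin d)) with hs
    set r := p - s with hr
    have hrW : r ∈ Wᗮ := Submodule.sub_starProjection_mem_orthogonal (K := W) p
    have hr0 : r ≠ 0 := by
      intro h
      apply hpnW
      have : p = s := by rwa [hr, sub_eq_zero] at h
      rw [this]; exact (W.orthogonalProjectionOnto p).2
    have hrn : (0:ℝ) < ‖r‖ := norm_pos_iff.mpr hr0
    have hrpos : (0:ℝ) < ‖r‖^2 := by positivity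
    have hslack : ∀ k ∈ E \ A, ⟪v k, p⟫_ℝ < m k := by
      intro k hk
      rcases Finset.mem_sdiff.mp hk with ⟨hkE, hkA⟩
      rcases lt_or_eq_of_le (hpP.2 k hkE) with h | h
      · exact h
      · exact absurd (Finset.mem_filter.2 ⟨hkE, h⟩) hkA
    set gap : Fin n → ℝ := fun k => (m k - ⟪v k, p⟫_ℝ) / (‖v k‖ * ‖r‖ + 1) with hgap
    set θ : ℝ := if hB : (E \ A).Nonempty then min 1 ((E \ A).inf' hB gap) else 1 with hθ
    have hθ1 : θ ≤ 1 := by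
      rw [hθ]; split
      · exact min_le_left _ _
      · exact le_refl 1
    have hθpos : 0 < θ := by
      rw [hθ]; split
      case isTrue hB =>
        refine lt_min one_pos ?_
        rw [Finset.lt_inf'_iff]
        intro k hk
        have := hslack k hk
        have hd : (0:ℝ) < ‖v k‖ * ‖r‖ + 1 := by positivity
        exact div_pos (by linarith) hd
      case isFalse => exact one_pos
    have hθgap : ∀ k ∈ E \ A, θ * (‖v k‖ * ‖r‖) ≤ m k - ⟪v k, p⟫_ℝ := by
      intro k hk
      have h1 : θ ≤ gap k := by
        rw [hθ]
        rw [dif_pos ⟨k, hk⟩]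
        exact le_trans (min_le_right _ _) (Finset.inf'_le _ hk)
      have hd : (0:ℝ) < ‖v k‖ * ‖r‖ + 1 := by positivity
      have h2 : θ * (‖v k‖ * ‖r‖ + 1) ≤ m k - ⟪v k, p⟫_ℝ := by
        rw [hgap] at h1
        calc θ * (‖v k‖ * ‖r‖ + 1) ≤ ((m k - ⟪v k, p⟫_ℝ) / (‖v k‖ * ‖r‖ + 1)) * (‖v k‖ * ‖r‖ + 1) :=
              mul_le_mul_of_nonneg_right h1 (le_of_lt hd)
          _ = m k - ⟪v k, p⟫_ℝ := div_mul_cancel₀ _ (ne_of_gt hd)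
      nlinarith
    have hrA : ∀ k ∈ A, ⟪v k, r⟫_ℝ = 0 := fun k hk =>
      hrW (v k) (hvW k hk)
    set p' := p - θ • r with hp'
    have hp'P : p' ∈ P := by
      constructor
      · rw [hp', inner_sub_right, real_inner_smul_right, hrA i hiA]
        simpa using hpP.1
      · intro k hkE
        by_cases hkA : k ∈ A
        · rw [hp', inner_sub_right, real_inner_smul_right, hrA k hkA]
          simpa using hpP.2 k hkE
        · have hk : k ∈ E \ A := Finset.mem_sdiff.2 ⟨hkE, hkA⟩
          have h1 : |⟪v k, r⟫_ℝ| ≤ ‖v k‖ * ‖r‖ := abs_real_inner_le_norm _ _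
          have h2 := hθgap k hk
          rw [hp', inner_sub_right, real_inner_smul_right]
          have : -(θ * ⟪v k, r⟫_ℝ) ≤ θ * (‖v k‖ * ‖r‖) := by
            rw [← mul_neg]
            apply mul_le_mul_of_nonneg_left _ (le_of_lt hθpos)
            have := abs_le.mp h1
            linarith [this.1]
          linarith
    have hpr : ⟪p, r⟫_ℝ = ‖r‖^2 := by
      have hsW : s ∈ W := (W.orthogonalProjectionOnto p).2
      have hsr : ⟪s, r⟫_ℝ = 0 := hrW s hsW
      have : p = s + r := by rw [hr]; abel
      rw [this, inner_add_left, hsr, real_inner_self_eq_norm_sq]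
      ring
    have hlt : ‖p'‖ < ‖p‖ := by
      have hsq : ‖p'‖^2 < ‖p‖^2 := by
        have := norm_sub_sq_real p (θ • r)
        rw [hp']
        rw [this, real_inner_smul_right, hpr, norm_smul, Real.norm_eq_abs,
          abs_of_pos hθpos, mul_pow]
        have h1 : θ^2 ≤ θ := by nlinarith
        have h2 : θ^2 * ‖r‖^2 ≤ θ * ‖r‖^2 := mul_le_mul_of_nonneg_right h1 hrpos.le
        have h3 : 0 < θ * ‖r‖^2 := mul_pos hθpos hrpos
        linarith
      exact lt_of_pow_lt_pow_left₀ 2 (norm_nonneg _) hsq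
    exact absurd (hpmin p' hp'P) (not_le.mpr hlt)
  refine ⟨p, hpP.1, hpP.2, ?_⟩
  have hb : ‖p‖ ≤ CA A * M := by
    apply hCA A p hpW M hM0
    intro k hk
    have hkE : k ∈ E := (Finset.mem_filter.mp hk).1
    have heq : ⟪v k, p⟫_ℝ = m k := (Finset.mem_filter.mp hk).2
    rw [heq, abs_le]
    exact ⟨(hm k hkE).1, le_trans (hm k hkE).2 hM0⟩
  calc ‖p‖ ≤ CA A * M := hb
    _ ≤ C * M := mul_le_mul_of_nonneg_right (Finset.le_sup' _ (Finset.mem_univ A)) hM0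

theorem facet_hausdorff_convergence (d n : ℕ)
    (a : Fin n → EuclideanSpace ℝ (Fin d)) (b : Fin n → ℝ)
    (Ω : Set (EuclideanSpace ℝ (Fin d)))
    (hΩ : Ω = ⋂ k : Fin n, {x : EuclideanSpace ℝ (Fin d) | ⟪a k, x⟫_ℝ ≤ b k})
    (hcpt : IsCompact Ω)
    (i : Fin n)
    (F : Set (EuclideanSpace ℝ (Fin d)))
    (hF : F = Ω ∩ {x : EuclideanSpace ℝ (Fin d) | ⟪a i, x⟫_ℝ = b i})
    (Ft : EuclideanSpace ℝ (Fin d) → Set (EuclideanSpace ℝ (Fin d)))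
    (hFt : ∀ t, Ft t = (Ω ∩ ((fun x => x + t) '' Ω)) ∩
      {x : EuclideanSpace ℝ (Fin d) | ⟪a i, x⟫_ℝ = min (b i) (b i + ⟪a i, t⟫_ℝ)}) :
    Filter.Tendsto (fun t => Metric.hausdorffDist (Ft t) F) (nhds 0) (nhds 0) := by
  classical
  have hΩmem : ∀ x, x ∈ Ω ↔ ∀ k, ⟪a k, x⟫_ℝ ≤ b k := fun x => by rw [hΩ]; simp
  set R : ℝ := 1 + ∑ k, ‖a k‖ with hR
  have hsum0 : (0:ℝ) ≤ ∑ k, ‖a k‖ := Finset.sum_nonneg fun k _ => norm_nonneg _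
  have hR1 : (1:ℝ) ≤ R := by rw [hR]; linarith
  have hRpos : (0:ℝ) < R := lt_of_lt_of_le one_pos hR1
  have haR : ∀ k, ‖a k‖ ≤ R := by
    intro k
    have h1 : ‖a k‖ ≤ ∑ j, ‖a j‖ :=
      Finset.single_le_sum (f := fun j => ‖a j‖) (fun j _ => norm_nonneg _) (Finset.mem_univ k)
    rw [hR]; linarith
  have hip : ∀ (k : Fin n) (t : EuclideanSpace ℝ (Fin d)), |⟪a k, t⟫_ℝ| ≤ R * ‖t‖ := by
    intro k t
    calc |⟪a k, t⟫_ℝ| ≤ ‖a k‖ * ‖t‖ := abs_real_inner_le_norm _ _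
      _ ≤ R * ‖t‖ := mul_le_mul_of_nonneg_right (haR k) (norm_nonneg _)
  have hmin : ∀ t : EuclideanSpace ℝ (Fin d),
      b i - R * ‖t‖ ≤ min (b i) (b i + ⟪a i, t⟫_ℝ) := by
    intro t
    have h := abs_le.mp (hip i t)
    have h0 : 0 ≤ R * ‖t‖ := mul_nonneg hRpos.le (norm_nonneg t)
    exact le_min (by linarith) (by linarith [h.1])
  rw [Metric.tendsto_nhds]
  intro ε hε
  suffices h : ∃ δ > 0, ∀ t : EuclideanSpace ℝ (Fin d), ‖t‖ < δ →
      Metric.hausdorffDist (Ft t) F ≤ ε / 2 by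
    obtain ⟨δ, hδpos, hh⟩ := h
    rw [Metric.eventually_nhds_iff]
    refine ⟨δ, hδpos, fun t ht => ?_⟩
    have h1 := hh t (by rwa [dist_zero_right] at ht)
    rw [Real.dist_eq, sub_zero, abs_of_nonneg Metric.hausdorffDist_nonneg]
    linarith
  set η := ε / 2 with hη
  have hηpos : 0 < η := by rw [hη]; exact half_pos hε
  rcases F.eq_empty_or_nonempty with hFe | ⟨y₀, hy₀F⟩
  · rcases Ω.eq_empty_or_nonempty with hΩe | hΩne
    · refine ⟨1, one_pos, fun t ht => ?_⟩
      have hFte : Ft t = ∅ := by rw [hFt t, hΩe]; simp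
      rw [hFte, Metric.hausdorffDist_empty']
      linarith
    · obtain ⟨xs, hxsΩ, hxs⟩ := hcpt.exists_isMaxOn (f := fun x => ⟪a i, x⟫_ℝ) hΩne
        ((continuous_const.inner continuous_id).continuousOn)
      have hclt : ⟪a i, xs⟫_ℝ < b i := by
        rcases lt_or_eq_of_le ((hΩmem xs).mp hxsΩ i) with h | h
        · exact h
        · exact absurd (show xs ∈ F by rw [hF]; exact ⟨hxsΩ, h⟩) (by rw [hFe]; simp)
      refine ⟨(b i - ⟪a i, xs⟫_ℝ) / R, div_pos (by linarith) hRpos, fun t ht => ?_⟩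
      have hFte : Ft t = ∅ := by
        rw [Set.eq_empty_iff_forall_notMem]
        intro x hx
        rw [hFt t] at hx
        have hxΩ : x ∈ Ω := hx.1.1
        have hle : ⟪a i, x⟫_ℝ ≤ ⟪a i, xs⟫_ℝ := hxs hxΩ
        have h1 : b i - R * ‖t‖ ≤ ⟪a i, x⟫_ℝ := hx.2 ▸ hmin t
        have h2 : R * ‖t‖ < b i - ⟪a i, xs⟫_ℝ := by
          calc R * ‖t‖ < R * ((b i - ⟪a i, xs⟫_ℝ)/R) := mul_lt_mul_of_pos_left ht hRpos
            _ = b i - ⟪a i, xs⟫_ℝ := by rw [mul_comm, div_mul_cancel₀ _ (ne_of_gt hRpos)]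
        linarith
      rw [hFte, Metric.hausdorffDist_empty']
      linarith
  · -- F nonempty
    have hFsub : F ⊆ Ω := by rw [hF]; exact Set.inter_subset_left
    have hlin : ∀ k, IsLinearMap ℝ (fun x : EuclideanSpace ℝ (Fin d) => ⟪a k, x⟫_ℝ) :=
      fun k => ⟨fun x y => inner_add_right _ _ _, fun cc x => by
        rw [real_inner_smul_right]; rfl⟩
    have hFconv : Convex ℝ F := by
      rw [hF]
      refine Convex.inter ?_ (convex_hyperplane (hlin i) (b i))
      rw [hΩ]
      exact convex_iInter fun k => convex_halfSpace_le (hlin k) (b k)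
    -- direction 1
    have hUopen : IsOpen {x : EuclideanSpace ℝ (Fin d) | Metric.infDist x F < η} :=
      isOpen_lt (Metric.continuous_infDist_pt F) continuous_const
    set V : ℕ → Set (EuclideanSpace ℝ (Fin d)) :=
      fun mm => Ω ∩ {x | b i - 1/(mm+1) ≤ ⟪a i, x⟫_ℝ} with hV
    have hVcl : ∀ mm, IsClosed (V mm) := fun mm =>
      hcpt.isClosed.inter (isClosed_le continuous_const (continuous_const.inner continuous_id))
    have hVcpt : ∀ mm, IsCompact (V mm) := fun mm =>
      hcpt.inter_right (isClosed_le continuous_const (continuous_const.inner continuous_id))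
    have hVmono : ∀ {m1 m2 : ℕ}, m1 ≤ m2 → V m2 ⊆ V m1 := by
      intro m1 m2 hm x hx
      refine ⟨hx.1, ?_⟩
      have h2 := hx.2
      simp only [Set.mem_setOf_eq] at h2 ⊢
      have hc : (1:ℝ)/(m2+1) ≤ 1/(m1+1) := by
        apply one_div_le_one_div_of_le (by positivity)
        have : (m1:ℝ) ≤ (m2:ℝ) := Nat.cast_le.mpr hm
        linarith
      linarith
    have hVdir : Directed (· ⊇ ·) V := fun m1 m2 =>
      ⟨max m1 m2, hVmono (le_max_left _ _), hVmono (le_max_right _ _)⟩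
    have hsubn : ∀ x ∈ ⋂ mm, V mm, {x : EuclideanSpace ℝ (Fin d) | Metric.infDist x F < η} ∈ nhds x := by
      intro x hx
      apply hUopen.mem_nhds
      have hxΩ : x ∈ Ω := (Set.mem_iInter.mp hx 0).1
      have hxge : b i ≤ ⟪a i, x⟫_ℝ := by
        by_contra hlt
        push_neg at hlt
        obtain ⟨mm, hmm⟩ := exists_nat_one_div_lt (show (0:ℝ) < b i - ⟪a i, x⟫_ℝ by linarith)
        have h2 := (Set.mem_iInter.mp hx mm).2
        simp only [Set.mem_setOf_eq] at h2
        linarith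
      have hxF : x ∈ F := by
        rw [hF]
        exact ⟨hxΩ, le_antisymm ((hΩmem x).mp hxΩ i) hxge⟩
      simp only [Set.mem_setOf_eq]
      rw [Metric.infDist_zero_of_mem hxF]
      exact hηpos
    obtain ⟨m₀, hm₀⟩ := exists_subset_nhds_of_isCompact' hVdir hVcpt hVcl hsubn
    set δ₁ : ℝ := 1/(m₀+1) with hδ₁
    have hδ₁pos : 0 < δ₁ := by positivity
    have dir1 : ∀ t : EuclideanSpace ℝ (Fin d), R * ‖t‖ < δ₁ →
        ∀ x ∈ Ft t, Metric.infDist x F ≤ η := by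
      intro t ht x hx
      rw [hFt t] at hx
      have hxΩ : x ∈ Ω := hx.1.1
      have h1 : b i - R*‖t‖ ≤ ⟪a i, x⟫_ℝ := hx.2 ▸ hmin t
      have hxV : x ∈ V m₀ := ⟨hxΩ, by simp only [Set.mem_setOf_eq]; rw [← hδ₁]; linarith⟩
      exact le_of_lt (hm₀ hxV)
    -- direction 2 setup
    set E : Finset (Fin n) := Finset.univ.filter (fun k => ∀ x ∈ F, ⟪a k, x⟫_ℝ = b k) with hE
    have hiE : i ∈ E := by
      rw [hE]
      refine Finset.mem_filter.2 ⟨Finset.mem_univ _, fun x hx => ?_⟩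
      rw [hF] at hx; exact hx.2
    have hEeq : ∀ k ∈ E, ∀ x ∈ F, ⟪a k, x⟫_ℝ = b k := fun k hk => (Finset.mem_filter.mp hk).2
    have hnE : ∀ k, k ∉ E → ∃ x ∈ F, ⟪a k, x⟫_ℝ < b k := by
      intro k hk
      rw [hE, Finset.mem_filter] at hk
      push_neg at hk
      obtain ⟨x, hxF, hxne⟩ := hk (Finset.mem_univ k)
      exact ⟨x, hxF, lt_of_le_of_ne ((hΩmem x).mp (hFsub hxF) k) hxne⟩
    set S : Finset (Fin n) := Finset.univ.filter (fun k => k ∉ E) with hS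
    have hSmem : ∀ k, k ∈ S ↔ k ∉ E := fun k => by rw [hS]; simp
    obtain ⟨q, hqF, hq⟩ : ∃ q ∈ F, ∀ k, k ∉ E → ⟪a k, q⟫_ℝ < b k := by
      rcases S.eq_empty_or_nonempty with hSe | hSne
      · exact ⟨y₀, hy₀F, fun k hk => absurd ((hSmem k).mpr hk) (by rw [hSe]; simp)⟩
      · choose! w hwF hwlt using hnE
        have hcard : (0:ℝ) < S.card := by exact_mod_cast Finset.card_pos.mpr hSne
        refine ⟨S.centerMass (fun _ => (1:ℝ)) w, ?_, ?_⟩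
        · refine hFconv.centerMass_mem (fun k _ => zero_le_one) ?_
            (fun k hk => hwF k ((hSmem k).mp hk))
          rw [Finset.sum_const, nsmul_eq_mul, mul_one]
          exact hcard
        · intro k hk
          have hkS : k ∈ S := (hSmem k).mpr hk
          have hval : ∀ j ∈ S, ⟪a k, w j⟫_ℝ ≤ b k := fun j hj =>
            (hΩmem (w j)).mp (hFsub (hwF j ((hSmem j).mp hj))) k
          have hsum : ∑ j ∈ S, ⟪a k, w j⟫_ℝ < (S.card : ℝ) * b k := by
            have h9 := Finset.sum_lt_sum hval ⟨k, hkS, hwlt k hk⟩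
            rwa [Finset.sum_const, nsmul_eq_mul] at h9
          have hqv : ⟪a k, S.centerMass (fun _ => (1:ℝ)) w⟫_ℝ
              = (S.card : ℝ)⁻¹ * ∑ j ∈ S, ⟪a k, w j⟫_ℝ := by
            rw [Finset.centerMass, Finset.sum_const, nsmul_eq_mul, mul_one,
              real_inner_smul_right]
            congr 1
            rw [inner_sum]
            exact Finset.sum_congr rfl fun j hj => by rw [real_inner_smul_right, one_mul]
          rw [hqv, inv_mul_lt_iff₀ hcard]
          exact hsum
    set c : ℝ := if hSne : S.Nonempty then S.inf' hSne (fun k => b k - ⟪a k, q⟫_ℝ) else 1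
      with hcdef
    have hcpos : 0 < c := by
      rw [hcdef]
      split
      case isTrue hSne =>
        rw [Finset.lt_inf'_iff]
        intro k hk
        have := hq k ((hSmem k).mp hk)
        linarith
      case isFalse => exact one_pos
    have hcle : ∀ k, k ∉ E → c ≤ b k - ⟪a k, q⟫_ℝ := by
      intro k hk
      have hkS : k ∈ S := (hSmem k).mpr hk
      rw [hcdef, dif_pos ⟨k, hkS⟩]
      exact Finset.inf'_le _ hkS
    obtain ⟨C, hC0, hHoff⟩ := hoffman d a E i hiE
    set D : ℝ := Metric.diam Ω with hD
    have hD0 : 0 ≤ D := Metric.diam_nonneg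
    set μ : ℝ := min 1 (η / (2*(D+1))) with hμ
    have hμpos : 0 < μ := lt_min one_pos (by positivity)
    have hμ1 : μ ≤ 1 := min_le_left _ _
    have hμD : μ * D ≤ η / 2 := by
      have h1 : μ ≤ η / (2*(D+1)) := min_le_right _ _
      have h2 : μ * D ≤ (η / (2*(D+1))) * D := mul_le_mul_of_nonneg_right h1 hD0
      have h3 : (η / (2*(D+1))) * D ≤ η / 2 := by
        rw [div_mul_eq_mul_div, div_le_div_iff₀ (by positivity) (by positivity)]
        nlinarith
      linarith
    set K1 : ℝ := C * R with hK1
    have hK1pos : 0 < K1 := mul_pos hC0 hRpos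
    refine ⟨min (δ₁/(2*R)) (min (μ*c/(R*K1 + R + 1)) ((η/2)/(K1+1))), by positivity,
      fun t ht => ?_⟩
    have ht1 : R * ‖t‖ < δ₁ := by
      have h := lt_of_lt_of_le ht (min_le_left _ _)
      calc R*‖t‖ < R * (δ₁/(2*R)) := mul_lt_mul_of_pos_left h hRpos
        _ = δ₁/2 := by field_simp
        _ < δ₁ := by linarith
    have ht2 : (R*K1 + R + 1) * ‖t‖ ≤ μ * c := by
      have h := lt_of_lt_of_le ht (le_trans (min_le_right _ _) (min_le_left _ _))
      have h2 := mul_lt_mul_of_pos_left h (show (0:ℝ) < R*K1+R+1 by positivity)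
      refine le_of_lt (lt_of_lt_of_le h2 (le_of_eq ?_))
      first
      | (field_simp; ring)
      | field_simp
    have ht3 : (K1+1) * ‖t‖ ≤ η/2 := by
      have h := lt_of_lt_of_le ht (le_trans (min_le_right _ _) (min_le_right _ _))
      have h2 := mul_lt_mul_of_pos_left h (show (0:ℝ) < K1+1 by positivity)
      refine le_of_lt (lt_of_lt_of_le h2 (le_of_eq ?_))
      first
      | (field_simp; ring)
      | field_simp
    rcases (Ft t).eq_empty_or_nonempty with hFte | ⟨x₀, hx₀⟩
    · rw [hFte, Metric.hausdorffDist_empty']; linarith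
    · apply Metric.hausdorffDist_le_of_infDist (le_of_lt hηpos)
      · intro x hx; exact dir1 t ht1 x hx
      · intro y hyF
        rw [hFt t] at hx₀
        have hx₀Ω : x₀ ∈ Ω := hx₀.1.1
        have hx₀Ω' : x₀ - t ∈ Ω := by
          obtain ⟨u, huΩ, hu⟩ := hx₀.1.2
          have : x₀ - t = u := by rw [← hu]; simp
          rwa [this]
        have hx₀i : ⟪a i, x₀⟫_ℝ = min (b i) (b i + ⟪a i, t⟫_ℝ) := hx₀.2
        set m : Fin n → ℝ := fun k => min 0 ⟪a k, t⟫_ℝ with hm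
        have hmin' : ∀ k, b k + m k = min (b k) (b k + ⟪a k, t⟫_ℝ) := by
          intro k
          simp only [hm]
          rcases le_total (0:ℝ) ⟪a k, t⟫_ℝ with h | h
          · rw [min_eq_left h, min_eq_left (by linarith)]; ring
          · rw [min_eq_right h, min_eq_right (by linarith)]
        have hmlow : ∀ k, -(R*‖t‖) ≤ m k := by
          intro k
          simp only [hm]
          have h := (abs_le.mp (hip k t)).1
          have h0 : 0 ≤ R * ‖t‖ := mul_nonneg hRpos.le (norm_nonneg t)
          exact le_min (by linarith) (by linarith)
        have hmbd : ∀ k ∈ E, -(R*‖t‖) ≤ m k ∧ m k ≤ 0 :=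
          fun k _ => ⟨hmlow k, min_le_left _ _⟩
        set w := (1-μ) • y + μ • q with hw
        have hwF : w ∈ F := hFconv hyF hqF (by linarith) hμpos.le (by ring)
        have hwin : ∀ k, ⟪a k, w⟫_ℝ = (1-μ) * ⟪a k, y⟫_ℝ + μ * ⟪a k, q⟫_ℝ := by
          intro k
          rw [hw, inner_add_right, real_inner_smul_right, real_inner_smul_right]
        have hfeas1 : ⟪a i, x₀ - w⟫_ℝ = m i := by
          rw [inner_sub_right, hEeq i hiE w hwF, hx₀i, ← hmin' i]
          ring
        have hfeas2 : ∀ k ∈ E, ⟪a k, x₀ - w⟫_ℝ ≤ m k := by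
          intro k hk
          rw [inner_sub_right, hEeq k hk w hwF]
          simp only [hm]
          refine le_min (by linarith [(hΩmem x₀).mp hx₀Ω k]) ?_
          have h2 := (hΩmem _).mp hx₀Ω' k
          rw [inner_sub_right] at h2
          linarith
        obtain ⟨p, hpi, hpE, hpnorm⟩ := hHoff m (R*‖t‖) hmbd ⟨x₀ - w, hfeas1, hfeas2⟩
        have hpn : ‖p‖ ≤ K1 * ‖t‖ := by
          rw [hK1, mul_assoc]
          exact hpnorm
        set z := w + p with hz
        have hzin : ∀ k, ⟪a k, z⟫_ℝ = ⟪a k, w⟫_ℝ + ⟪a k, p⟫_ℝ := fun k => by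
          rw [hz, inner_add_right]
        have hkey : ∀ k, ⟪a k, z⟫_ℝ ≤ b k + m k := by
          intro k
          by_cases hk : k ∈ E
          · rw [hzin k, hEeq k hk w hwF]
            linarith [hpE k hk]
          · have h1 : ⟪a k, w⟫_ℝ ≤ b k - μ * c := by
              rw [hwin k]
              have hy1 : ⟪a k, y⟫_ℝ ≤ b k := (hΩmem y).mp (hFsub hyF) k
              have hq1 : ⟪a k, q⟫_ℝ ≤ b k - c := by linarith [hcle k hk]
              nlinarith
            have h2 : ⟪a k, p⟫_ℝ ≤ R * (K1 * ‖t‖) := by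
              calc ⟪a k, p⟫_ℝ ≤ ‖a k‖ * ‖p‖ := real_inner_le_norm _ _
                _ ≤ R * (K1*‖t‖) := mul_le_mul (haR k) hpn (norm_nonneg _) hRpos.le
            have h3 := hmlow k
            rw [hzin k]
            nlinarith [norm_nonneg t, ht2]
        have hzΩ : z ∈ Ω := (hΩmem z).mpr fun k => by
          have h4 : m k ≤ 0 := min_le_left _ _
          linarith [hkey k]
        have hztΩ : z - t ∈ Ω := (hΩmem _).mpr fun k => by
          rw [inner_sub_right]
          have h5 : m k ≤ ⟪a k, t⟫_ℝ := min_le_right _ _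
          linarith [hkey k]
        have hzi : ⟪a i, z⟫_ℝ = min (b i) (b i + ⟪a i, t⟫_ℝ) := by
          rw [hzin i, hEeq i hiE w hwF, hpi, hmin' i]
        have hzFt : z ∈ Ft t := by
          rw [hFt t]
          exact ⟨⟨hzΩ, ⟨z - t, hztΩ, by simp⟩⟩, hzi⟩
        have hdist : dist y z ≤ η := by
          have hyz : y - z = μ • (y - q) - p := by rw [hz, hw]; module
          have hn1 : ‖y - z‖ ≤ μ * ‖y - q‖ + ‖p‖ := by
            rw [hyz]
            calc ‖μ • (y-q) - p‖ ≤ ‖μ • (y-q)‖ + ‖p‖ := norm_sub_le _ _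
              _ = μ * ‖y-q‖ + ‖p‖ := by
                  rw [norm_smul, Real.norm_eq_abs, abs_of_pos hμpos]
          have hdqy : ‖y - q‖ ≤ D := by
            rw [← dist_eq_norm]
            exact Metric.dist_le_diam_of_mem hcpt.isBounded (hFsub hyF) (hFsub hqF)
          have h6 : μ * ‖y - q‖ ≤ η/2 :=
            le_trans (mul_le_mul_of_nonneg_left hdqy hμpos.le) hμD
          have h7 : ‖p‖ ≤ η/2 := by
            have h8 : K1*‖t‖ ≤ (K1+1)*‖t‖ := by nlinarith [norm_nonneg t]
            linarith [ht3, hpn]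
          rw [dist_eq_norm]
          linarith
        exact le_trans (Metric.infDist_le_dist_of_mem hzFt) hdist
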